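/- The EM (Baum-Welch) step does not decrease the log-likelihood: let θ and θ' be two parameter sets for a finite hidden Markov model, fix an observation sequence x ∈ X^L, assume Z_θ := Σ_{σ ∈ S^L} P_θ(σ,x) > 0 and P_{θ'}(σ,x) > 0 for every σ with P_θ(σ,x) > 0. Then log Z_{θ'} − log Z_θ ≥ Q(θ';θ) − Q(θ;θ), where Q(η;θ) := Σ_{σ ∈ S^L} (P_θ(σ,x)/Z_θ) · log P_η(σ,x). In particular, if Q(θ';θ) ≥ Q(θ;θ) then the likelihood satisfies Z_{θ'} ≥ Z_θ. -/

import Mathlib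

open Finset

/-- The joint probability `P_θ(σ,x)` of a hidden Markov model of length `n+1`. -/
noncomputable def joint {S X : Type*} (π : S → ℝ) (T : S → S → ℝ) (E : X → S → ℝ)
    (x : ℕ → X) (n : ℕ) (σ : Fin (n + 1) → S) : ℝ :=
  π (σ 0) * (∏ j : Fin n, T (σ j.castSucc) (σ j.succ)) *
    ∏ j : Fin (n + 1), E (x j) (σ j)

/-- The EM (Baum-Welch) step does not decrease the log-likelihood: for
parameter sets `θ = (π,T,E)` and `θ' = (π',T',E')` and a fixed observation sequence,
if `Z_θ := Σ_σ P_θ(σ,x) > 0` and `P_{θ'}(σ,x) > 0` for every `σ` with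
`P_θ(σ,x) > 0`, then `log Z_{θ'} − log Z_θ ≥ Q(θ';θ) − Q(θ;θ)`, where
`Q(η;θ) := Σ_σ (P_θ(σ,x)/Z_θ) · log P_η(σ,x)`.  In particular, if
`Q(θ';θ) ≥ Q(θ;θ)` then `Z_{θ'} ≥ Z_θ`. -/
theorem hmm_EM_monotone {S X : Type*} [Fintype S] [Fintype X]
    (π : S → ℝ) (T : S → S → ℝ) (E : X → S → ℝ)
    (hπ0 : ∀ s, 0 ≤ π s) (hπ1 : ∑ s, π s = 1)
    (hT0 : ∀ s t, 0 ≤ T s t) (hT1 : ∀ s, ∑ t, T s t = 1)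
    (hE0 : ∀ x s, 0 ≤ E x s) (hE1 : ∀ s, ∑ x, E x s = 1)
    (π' : S → ℝ) (T' : S → S → ℝ) (E' : X → S → ℝ)
    (hπ'0 : ∀ s, 0 ≤ π' s) (hπ'1 : ∑ s, π' s = 1)
    (hT'0 : ∀ s t, 0 ≤ T' s t) (hT'1 : ∀ s, ∑ t, T' s t = 1)
    (hE'0 : ∀ x s, 0 ≤ E' x s) (hE'1 : ∀ s, ∑ x, E' x s = 1)
    (n : ℕ) (x : ℕ → X)
    (hZ : 0 < ∑ σ : Fin (n + 1) → S, joint π T E x n σ)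
    (habs : ∀ σ : Fin (n + 1) → S, 0 < joint π T E x n σ → 0 < joint π' T' E' x n σ) :
    (Real.log (∑ σ : Fin (n + 1) → S, joint π' T' E' x n σ) -
        Real.log (∑ σ : Fin (n + 1) → S, joint π T E x n σ) ≥
      (∑ σ : Fin (n + 1) → S,
          (joint π T E x n σ / ∑ τ : Fin (n + 1) → S, joint π T E x n τ) *
            Real.log (joint π' T' E' x n σ)) -
        ∑ σ : Fin (n + 1) → S,
          (joint π T E x n σ / ∑ τ : Fin (n + 1) → S, joint π T E x n τ) *
            Real.log (joint π T E x n σ)) ∧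
    ((∑ σ : Fin (n + 1) → S,
          (joint π T E x n σ / ∑ τ : Fin (n + 1) → S, joint π T E x n τ) *
            Real.log (joint π' T' E' x n σ)) ≥
        (∑ σ : Fin (n + 1) → S,
          (joint π T E x n σ / ∑ τ : Fin (n + 1) → S, joint π T E x n τ) *
            Real.log (joint π T E x n σ)) →
      (∑ σ : Fin (n + 1) → S, joint π' T' E' x n σ) ≥
        ∑ σ : Fin (n + 1) → S, joint π T E x n σ) := by
  classical
  set Z := ∑ σ : Fin (n + 1) → S, joint π T E x n σ with hZdef
  set Z' := ∑ σ : Fin (n + 1) → S, joint π' T' E' x n σ with hZ'def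
  have hPnn : ∀ σ : Fin (n + 1) → S, 0 ≤ joint π T E x n σ := fun σ => by
    unfold joint
    exact mul_nonneg (mul_nonneg (hπ0 _) (Finset.prod_nonneg fun j _ => hT0 _ _))
      (Finset.prod_nonneg fun j _ => hE0 _ _)
  have hP'nn : ∀ σ : Fin (n + 1) → S, 0 ≤ joint π' T' E' x n σ := fun σ => by
    unfold joint
    exact mul_nonneg (mul_nonneg (hπ'0 _) (Finset.prod_nonneg fun j _ => hT'0 _ _))
      (Finset.prod_nonneg fun j _ => hE'0 _ _)
  have hZ' : 0 < Z' := by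
    obtain ⟨σ0, hσ0⟩ : ∃ σ : Fin (n + 1) → S, 0 < joint π T E x n σ := by
      by_contra h
      push_neg at h
      have : Z ≤ 0 := Finset.sum_nonpos fun σ _ => h σ
      linarith
    exact lt_of_lt_of_le (habs σ0 hσ0)
      (Finset.single_le_sum (fun σ _ => hP'nn σ) (Finset.mem_univ σ0))
  have key : ∀ σ : Fin (n + 1) → S,
      (joint π T E x n σ / Z) * Real.log (joint π' T' E' x n σ) -
        (joint π T E x n σ / Z) * Real.log (joint π T E x n σ) ≤
      (joint π T E x n σ / Z) * Real.log Z' - (joint π T E x n σ / Z) * Real.log Z +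
        (joint π' T' E' x n σ / Z' - joint π T E x n σ / Z) := by
    intro σ
    rcases (hPnn σ).eq_or_lt with h0 | hpos
    · rw [← h0]
      simp
      have := div_nonneg (hP'nn σ) hZ'.le
      linarith
    · have hpos' := habs σ hpos
      have hfrac : 0 < joint π' T' E' x n σ * Z / (joint π T E x n σ * Z') := by positivity
      have h1 := Real.log_le_sub_one_of_pos hfrac
      rw [Real.log_div (by positivity) (by positivity), Real.log_mul hpos'.ne' hZ.ne',
        Real.log_mul hpos.ne' hZ'.ne'] at h1
      have hp : 0 < joint π T E x n σ / Z := div_pos hpos hZ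
      have hid : (joint π T E x n σ / Z) *
          (joint π' T' E' x n σ * Z / (joint π T E x n σ * Z')) =
          joint π' T' E' x n σ / Z' := by
        field_simp
      have h2 := mul_le_mul_of_nonneg_left h1 hp.le
      nlinarith [h2, hid]
  have hsum1 : ∑ σ : Fin (n + 1) → S, joint π T E x n σ / Z = 1 := by
    rw [← Finset.sum_div, ← hZdef, div_self hZ.ne']
  have hsum2 : ∑ σ : Fin (n + 1) → S, joint π' T' E' x n σ / Z' = 1 := by
    rw [← Finset.sum_div, ← hZ'def, div_self hZ'.ne']
  have hmain : (∑ σ : Fin (n + 1) → S,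
        (joint π T E x n σ / Z) * Real.log (joint π' T' E' x n σ)) -
      (∑ σ : Fin (n + 1) → S,
        (joint π T E x n σ / Z) * Real.log (joint π T E x n σ)) ≤
      Real.log Z' - Real.log Z := by
    rw [← Finset.sum_sub_distrib]
    calc (∑ σ : Fin (n + 1) → S,
          ((joint π T E x n σ / Z) * Real.log (joint π' T' E' x n σ) -
            (joint π T E x n σ / Z) * Real.log (joint π T E x n σ)))
        ≤ ∑ σ : Fin (n + 1) → S,
            ((joint π T E x n σ / Z) * Real.log Z' -
              (joint π T E x n σ / Z) * Real.log Z +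
              (joint π' T' E' x n σ / Z' - joint π T E x n σ / Z)) :=
          Finset.sum_le_sum fun σ _ => key σ
      _ = Real.log Z' - Real.log Z := by
          rw [Finset.sum_add_distrib, Finset.sum_sub_distrib, Finset.sum_sub_distrib,
            ← Finset.sum_mul, ← Finset.sum_mul, hsum1, hsum2]
          ring
  constructor
  · exact hmain
  · intro h
    have hlog : Real.log Z ≤ Real.log Z' := by linarith
    have := Real.exp_le_exp.mpr hlog
    rwa [Real.exp_log hZ, Real.exp_log hZ'] at this
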